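/- arXiv:2202.12849 — 2 statements merged into one kernel-verified Lean document; each statement's English description precedes it below -/
import Mathlib

section
/- Let E be an environment, Sem : V → Set(W) a fixed 'true semantics', and depth δ : W → ℕ. Suppose g is a generation function such that: (soundness) whenever A is a sound assignment (A(y) ⊆ Sem(y) for all y), the values produced by g from A lie in the true semantics; and (generativity) whenever A is i-witnessed (every variable y with a witness of depth ≤ i in Sem(y) satisfies A(y) ≠ ∅) and Sem(y) contains a value of depth ≤ i+1, then g applied to y and A produces at least one value. Then by induction, the assignment A^i obtained after i passes of the bottom-up algorithm (with A⁰ = empty, A^{i}(y) = g(E(y), A^{i-1}) when A^{i-1}(y) = ∅) is both sound and i-witnessed for every i. -/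
theorem bottomup_sound_and_witnessed
    (V : Type) [Finite V] (W : Type) (δ : W → ℕ) (hδ : ∀ w, 1 ≤ δ w)
    (Sem : V → Set W)
    (g : V → (V → Set W) → Set W)
    -- soundness of g
    (hsound : ∀ A : V → Set W, (∀ y, A y ⊆ Sem y) → ∀ y, g y A ⊆ Sem y)
    -- generativity of g
    (hgen : ∀ (A : V → Set W) (i : ℕ),
      (∀ y, (∃ w ∈ Sem y, δ w ≤ i) → A y ≠ ∅) →
      ∀ y, (∃ w ∈ Sem y, δ w ≤ i + 1) → g y A ≠ ∅)
    -- the bottom-up iteration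
    (A : ℕ → V → Set W)
    (hA0 : ∀ y, A 0 y = ∅)
    (hstep_empty : ∀ i y, A i y = ∅ → A (i + 1) y = g y (A i))
    (hstep_nonempty : ∀ i y, A i y ≠ ∅ → A (i + 1) y = A i y) :
    ∀ i : ℕ, (∀ y, A i y ⊆ Sem y) ∧ (∀ y, (∃ w ∈ Sem y, δ w ≤ i) → A i y ≠ ∅) := by
  intro i
  induction i with
  | zero =>
    refine ⟨fun y => by simp [hA0 y], fun y ⟨w, _, hw⟩ => ?_⟩
    exact absurd (le_trans (hδ w) hw) (by norm_num)
  | succ i ih =>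
    obtain ⟨ihs, ihw⟩ := ih
    constructor
    · intro y
      by_cases h : A i y = ∅
      · rw [hstep_empty i y h]; exact hsound (A i) ihs y
      · rw [hstep_nonempty i y h]; exact ihs y
    · intro y hy
      by_cases h : A i y = ∅
      · rw [hstep_empty i y h]; exact hgen (A i) i ihw y hy
      · rw [hstep_nonempty i y h]; exact h
end

section
/- Under the hypotheses of the previous invariant (g sound and generative), if the bottom-up algorithm terminates with 'unsatisfiable' after a useless pass j (i.e., A^j = A^{j-1}), then for every variable y: A^j(y) = ∅ implies Sem(y) = ∅. -/
theorem bottomup_useless_pass_unsat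
    (V : Type) [Finite V] (W : Type) (δ : W → ℕ) (hδ : ∀ w, 1 ≤ δ w)
    (Sem : V → Set W)
    (g : V → (V → Set W) → Set W)
    -- soundness of g
    (hsound : ∀ A : V → Set W, (∀ y, A y ⊆ Sem y) → ∀ y, g y A ⊆ Sem y)
    -- generativity of g
    (hgen : ∀ (A : V → Set W) (i : ℕ),
      (∀ y, (∃ w ∈ Sem y, δ w ≤ i) → A y ≠ ∅) →
      ∀ y, (∃ w ∈ Sem y, δ w ≤ i + 1) → g y A ≠ ∅)
    -- the bottom-up iteration
    (A : ℕ → V → Set W)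
    (hA0 : ∀ y, A 0 y = ∅)
    (hstep_empty : ∀ i y, A i y = ∅ → A (i + 1) y = g y (A i))
    (hstep_nonempty : ∀ i y, A i y ≠ ∅ → A (i + 1) y = A i y)
    -- pass j+1 is useless
    (j : ℕ) (huseless : A (j + 1) = A j) :
    ∀ y, A (j + 1) y = ∅ → Sem y = ∅ := by
  -- stability: A (j+1+n) = A j for all n
  have hstable : ∀ n, A (j + 1 + n) = A j := by
    intro n
    induction n with
    | zero => simpa using huseless
    | succ n ih =>
      funext y
      show A (j + 1 + n + 1) y = A j y
      by_cases h : A (j + 1 + n) y = ∅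
      · have h0 : A j y = ∅ := by rw [← ih]; exact h
        rw [hstep_empty _ _ h, ih, ← hstep_empty j y h0]
        exact congrFun huseless y
      · rw [hstep_nonempty _ _ h, ih]
  -- invariant: witnesses of depth ≤ i make A i nonempty
  have hinv : ∀ i y, (∃ w ∈ Sem y, δ w ≤ i) → A i y ≠ ∅ := by
    intro i
    induction i with
    | zero =>
      rintro y ⟨w, _, hw⟩
      exact absurd (le_trans (hδ w) hw) (by simp)
    | succ i ih =>
      intro y hy
      by_cases h : A i y = ∅
      · rw [hstep_empty _ _ h]
        exact hgen (A i) i ih y hy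
      · rw [hstep_nonempty _ _ h]
        exact h
  intro y hAy
  by_contra hne
  obtain ⟨w, hw⟩ := Set.nonempty_iff_ne_empty.mpr hne
  have h1 : A (j + 1 + δ w) y ≠ ∅ :=
    hinv _ y ⟨w, hw, Nat.le_add_left _ _⟩
  rw [hstable (δ w), ← huseless] at h1
  exact h1 hAy
end
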